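/- arXiv:2512.07013 — 2 statements merged into one kernel-verified Lean document; each statement's English description precedes it below -/
import Mathlib

section
/- Let a ≥ 0 and c ≠ 0 be real numbers. Then ∫ (max(0, a + c·x))² d(gaussianReal 0 1)(x) = (a² + c²)·(1 − Φ(−a/|c|)) + a·|c|·φ(−a/|c|). -/
open Filter Finset MeasureTheory ProbabilityTheory

/-- The cumulative distribution function of the standard Gaussian measure on `ℝ`. -/
noncomputable def gaussCDF (x : ℝ) : ℝ :=
  ((gaussianReal 0 1) (Set.Iic x)).toReal

/-- The density of the standard Gaussian measure on `ℝ`. -/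
noncomputable def gaussPDF (x : ℝ) : ℝ :=
  Real.exp (-x ^ 2 / 2) / Real.sqrt (2 * Real.pi)

lemma gaussianPDFReal_eq_gaussPDF (x : ℝ) : gaussianPDFReal 0 1 x = gaussPDF x := by
  simp only [gaussianPDFReal, gaussPDF, NNReal.coe_one, mul_one, sub_zero]
  ring

lemma gaussPDF_eq : gaussPDF = fun x => (Real.sqrt (2 * Real.pi))⁻¹ *
    Real.exp (-(2⁻¹ : ℝ) * x ^ 2) := by
  funext x
  rw [gaussPDF, show -x ^ 2 / 2 = -(2⁻¹ : ℝ) * x ^ 2 by ring]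
  ring

lemma integrable_sq_mul_exp : Integrable (fun x : ℝ => x ^ 2 * Real.exp (-(2⁻¹:ℝ) * x ^ 2)) := by
  have hbase : Integrable (fun x : ℝ => Real.exp (-(4⁻¹:ℝ) * x ^ 2)) :=
    integrable_exp_neg_mul_sq (by norm_num)
  refine Integrable.mono' (hbase.const_mul 4) ?_ ?_
  · exact ((measurable_id.pow_const 2).mul
      (((measurable_id.pow_const 2).const_mul _).exp)).aestronglyMeasurable
  · refine Filter.Eventually.of_forall fun x => ?_
    rw [Real.norm_eq_abs, abs_of_nonneg (by positivity)]
    have h1 : (4⁻¹:ℝ) * x ^ 2 ≤ Real.exp ((4⁻¹:ℝ) * x ^ 2) :=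
      le_trans (by linarith [Real.add_one_le_exp ((4⁻¹:ℝ) * x ^ 2)]) le_rfl
    have h2 : x ^ 2 ≤ 4 * Real.exp ((4⁻¹:ℝ) * x ^ 2) := by linarith
    calc x ^ 2 * Real.exp (-(2⁻¹:ℝ) * x ^ 2)
        ≤ 4 * Real.exp ((4⁻¹:ℝ) * x ^ 2) * Real.exp (-(2⁻¹:ℝ) * x ^ 2) := by
          exact mul_le_mul_of_nonneg_right h2 (Real.exp_pos _).le
      _ = 4 * Real.exp (-(4⁻¹:ℝ) * x ^ 2) := by
          rw [mul_assoc, ← Real.exp_add]; ring_nf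

lemma integrable_gaussPDF : Integrable gaussPDF := by
  rw [gaussPDF_eq]
  exact (integrable_exp_neg_mul_sq (by norm_num)).const_mul _

lemma integrable_sq_mul_gaussPDF (a c : ℝ) :
    Integrable (fun x : ℝ => gaussPDF x * (a + c * x) ^ 2) := by
  have h0 : Integrable (fun x : ℝ => Real.exp (-(2⁻¹:ℝ) * x ^ 2)) :=
    integrable_exp_neg_mul_sq (by norm_num)
  have h1 : Integrable (fun x : ℝ => x * Real.exp (-(2⁻¹:ℝ) * x ^ 2)) :=
    integrable_mul_exp_neg_mul_sq (by norm_num)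
  have h2 := integrable_sq_mul_exp
  have := (((h0.const_mul (a ^ 2)).add (h1.const_mul (2 * a * c))).add
      (h2.const_mul (c ^ 2))).const_mul (Real.sqrt (2 * Real.pi))⁻¹
  refine this.congr (Filter.Eventually.of_forall fun x => ?_)
  rw [gaussPDF_eq]
  simp only [Pi.add_apply]
  ring

lemma integral_gaussPDF : ∫ x, gaussPDF x = 1 := by
  have := integral_gaussianPDFReal_eq_one 0 (one_ne_zero)
  simp_rw [gaussianPDFReal_eq_gaussPDF] at this
  exact this

lemma gaussCDF_eq (t : ℝ) : gaussCDF t = ∫ x in Set.Iic t, gaussPDF x := by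
  rw [gaussCDF, gaussianReal_apply_eq_integral 0 one_ne_zero,
    ENNReal.toReal_ofReal (setIntegral_nonneg measurableSet_Iic
      fun x _ => gaussianPDFReal_nonneg 0 1 x)]
  exact setIntegral_congr_fun measurableSet_Iic fun x _ => gaussianPDFReal_eq_gaussPDF x

lemma integral_Ioi_gaussPDF (t : ℝ) : ∫ x in Set.Ioi t, gaussPDF x = 1 - gaussCDF t := by
  have h := integral_add_compl (measurableSet_Iic (a := t)) integrable_gaussPDF
  rw [Set.compl_Iic] at h
  rw [gaussCDF_eq, ← integral_gaussPDF]
  linarith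

lemma hasDerivAt_gaussPDF (x : ℝ) : HasDerivAt gaussPDF (-x * gaussPDF x) x := by
  have h1 : HasDerivAt (fun x : ℝ => -x ^ 2 / 2) (-x) x := by
    have := ((hasDerivAt_pow 2 x).neg.div_const 2)
    refine this.congr_deriv ?_
    ring
  have h2 := h1.exp
  have h3 := h2.div_const (Real.sqrt (2 * Real.pi))
  rw [show -x * gaussPDF x = Real.exp (-x ^ 2 / 2) * -x / Real.sqrt (2 * Real.pi) by
    rw [gaussPDF]; ring]
  exact h3

lemma tendsto_gaussPDF : Tendsto gaussPDF atTop (nhds 0) := by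
  have h0 : Tendsto (fun x : ℝ => x ^ 2 / 2) atTop atTop :=
    (tendsto_pow_atTop two_ne_zero).atTop_div_const two_pos
  have h1 : Tendsto (fun x : ℝ => -x ^ 2 / 2) atTop atBot := by
    have := tendsto_neg_atTop_atBot.comp h0
    refine this.congr fun x => ?_
    simp [Function.comp]
    ring
  have h2 := (Real.tendsto_exp_atBot.comp h1).div_const (Real.sqrt (2 * Real.pi))
  rw [zero_div] at h2
  exact h2.congr fun x => by rw [gaussPDF]; rfl

lemma tendsto_mul_gaussPDF : Tendsto (fun x => x * gaussPDF x) atTop (nhds 0) := by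
  have hlin : Tendsto (fun x : ℝ => -(1 / 2 : ℝ) * x) atTop atBot := by
    have h0 : Tendsto (fun x : ℝ => x / 2) atTop atTop := tendsto_id.atTop_div_const two_pos
    have := tendsto_neg_atTop_atBot.comp h0
    refine this.congr fun x => ?_
    simp [Function.comp]
    ring
  have hexp : Tendsto (fun x : ℝ => Real.exp (-(1 / 2 : ℝ) * x)) atTop (nhds 0) :=
    Real.tendsto_exp_atBot.comp hlin
  have h := (rpow_mul_exp_neg_mul_sq_isLittleO_exp_neg (by norm_num : (0:ℝ) < 2⁻¹)
    1).trans_tendsto hexp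
  have h2 : Tendsto (fun x : ℝ => x * Real.exp (-(2⁻¹:ℝ) * x ^ 2)) atTop (nhds 0) := by
    refine h.congr fun x => ?_
    rw [Real.rpow_one]
  have := h2.mul_const (Real.sqrt (2 * Real.pi))⁻¹
  rw [zero_mul] at this
  refine this.congr fun x => ?_
  rw [gaussPDF_eq]
  ring

/-- Key computation for `c > 0`. -/
lemma key_pos (a c : ℝ) (ha : 0 ≤ a) (hc : 0 < c) :
    ∫ x, (max 0 (a + c * x)) ^ 2 ∂(gaussianReal 0 1) =
      (a ^ 2 + c ^ 2) * (1 - gaussCDF (-a / c)) + a * c * gaussPDF (-a / c) := by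
  set t : ℝ := -a / c with ht
  have hct : a + c * t = 0 := by rw [ht]; field_simp; ring
  -- Step 1: rewrite as Lebesgue integral against the density
  have hstep1 : ∫ x, (max 0 (a + c * x)) ^ 2 ∂(gaussianReal 0 1)
      = ∫ x, gaussPDF x * (max 0 (a + c * x)) ^ 2 := by
    rw [gaussianReal_of_var_ne_zero 0 one_ne_zero]
    have hd : gaussianPDF 0 1 = fun x => ((gaussianPDFReal 0 1 x).toNNReal : ENNReal) := rfl
    rw [hd, integral_withDensity_eq_integral_smul₀
      ((measurable_gaussianPDFReal 0 1).real_toNNReal.aemeasurable) _]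
    refine integral_congr_ae (Filter.Eventually.of_forall fun x => ?_)
    simp only [NNReal.smul_def, smul_eq_mul]
    rw [Real.coe_toNNReal _ (gaussianPDFReal_nonneg 0 1 x), gaussianPDFReal_eq_gaussPDF]
  -- Step 2: indicator form
  have hstep2 : (fun x => gaussPDF x * (max 0 (a + c * x)) ^ 2)
      = Set.indicator (Set.Ioi t) (fun x => gaussPDF x * (a + c * x) ^ 2) := by
    funext x
    by_cases hx : x ∈ Set.Ioi t
    · rw [Set.indicator_of_mem hx]
      have : 0 ≤ a + c * x := by
        have : c * t ≤ c * x := mul_le_mul_of_nonneg_left (le_of_lt hx) hc.le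
        linarith
      rw [max_eq_right this]
    · rw [Set.indicator_of_notMem hx]
      have hxt : x ≤ t := le_of_not_gt hx
      have : a + c * x ≤ 0 := by
        have : c * x ≤ c * t := mul_le_mul_of_nonneg_left hxt hc.le
        linarith
      rw [max_eq_left this]
      ring
  -- Step 3: FTC on (t, ∞)
  set G : ℝ → ℝ := fun x => -(c ^ 2 * x + 2 * a * c) * gaussPDF x with hGdef
  have hderiv : ∀ x ∈ Set.Ici t, HasDerivAt G
      (gaussPDF x * (a + c * x) ^ 2 - (a ^ 2 + c ^ 2) * gaussPDF x) x := by
    intro x _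
    have hlin : HasDerivAt (fun x : ℝ => -(c ^ 2 * x + 2 * a * c)) (-c ^ 2) x := by
      have := (((hasDerivAt_id x).const_mul (c ^ 2)).add_const (2 * a * c)).neg
      exact this.congr_deriv (by ring)
    have := hlin.mul (hasDerivAt_gaussPDF x)
    refine this.congr_deriv ?_
    ring
  have hint1 : Integrable (fun x : ℝ => gaussPDF x * (a + c * x) ^ 2) :=
    integrable_sq_mul_gaussPDF a c
  have hint2 : Integrable (fun x : ℝ => (a ^ 2 + c ^ 2) * gaussPDF x) :=
    integrable_gaussPDF.const_mul _
  have hintOn : IntegrableOn (fun x => gaussPDF x * (a + c * x) ^ 2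
      - (a ^ 2 + c ^ 2) * gaussPDF x) (Set.Ioi t) :=
    (hint1.sub hint2).integrableOn
  have htend : Tendsto G atTop (nhds 0) := by
    have h1 := (tendsto_mul_gaussPDF.const_mul (c ^ 2)).add
      (tendsto_gaussPDF.const_mul (2 * a * c))
    rw [mul_zero, mul_zero, add_zero] at h1
    have := h1.neg
    rw [neg_zero] at this
    refine this.congr fun x => ?_
    simp only [hGdef]
    ring
  have hFTC := integral_Ioi_of_hasDerivAt_of_tendsto' hderiv hintOn htend
  rw [integral_sub hint1.integrableOn hint2.integrableOn,
    integral_const_mul, integral_Ioi_gaussPDF] at hFTC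
  have hGt : G t = -(a * c) * gaussPDF t := by
    have : c ^ 2 * t = -(a * c) := by
      rw [ht]; field_simp
    rw [hGdef]
    simp only
    rw [this]
    ring
  rw [hstep1, hstep2, integral_indicator measurableSet_Ioi]
  rw [hGt] at hFTC
  linarith

/-- Second moment of the rectified Gaussian: for `a ≥ 0`, `c ≠ 0`,
`∫ (max(0, a + c x))² dN(0,1)(x) = (a² + c²)(1 - Φ(-a/|c|)) + a |c| φ(-a/|c|)`. -/
theorem integral_sq_max_zero_add_linear_gaussian
    (a c : ℝ) (ha : 0 ≤ a) (hc : c ≠ 0) :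
    ∫ x, (max 0 (a + c * x)) ^ 2 ∂(gaussianReal 0 1) =
      (a ^ 2 + c ^ 2) * (1 - gaussCDF (-a / |c|)) + a * |c| * gaussPDF (-a / |c|) := by
  rcases hc.lt_or_gt with hneg | hpos
  · -- c < 0 : use symmetry x ↦ -x
    have hmap : (gaussianReal 0 1).map (fun x => -1 * x) = gaussianReal 0 1 := by
      have hv : (⟨(-1 : ℝ) ^ 2, sq_nonneg _⟩ : NNReal) * 1 = 1 := by
        ext; norm_num
      rw [gaussianReal_map_const_mul (-1 : ℝ)]
      congr 1
      norm_num
    have hF : AEStronglyMeasurable (fun x : ℝ => (max 0 (a + c * x)) ^ 2)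
        (gaussianReal 0 1) := by
      exact ((continuous_const.max (continuous_const.add
        (continuous_const.mul continuous_id))).pow 2).aestronglyMeasurable
    have hswap : ∫ x, (max 0 (a + c * x)) ^ 2 ∂(gaussianReal 0 1)
        = ∫ x, (max 0 (a + (-c) * x)) ^ 2 ∂(gaussianReal 0 1) := by
      have h := integral_map (μ := gaussianReal 0 1) (φ := fun x : ℝ => -1 * x)
        (f := fun x : ℝ => (max 0 (a + c * x)) ^ 2) (by fun_prop) (hmap.symm ▸ hF)
      rw [hmap] at h
      rw [h]
      refine integral_congr_ae (Filter.Eventually.of_forall fun x => ?_)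
      show (max 0 (a + c * (-1 * x))) ^ 2 = (max 0 (a + -c * x)) ^ 2
      rw [show a + c * (-1 * x) = a + -c * x by ring]
    rw [hswap, key_pos a (-c) ha (by linarith), abs_of_neg hneg]
    ring
  · rw [key_pos a c ha hpos, abs_of_pos hpos]
end

section
/- Let ζ₀ ≥ 0, ζ* > 0, γ > 0, σ > 0, and let (A_t), (B_t) be real sequences with A_t ≠ 0 and B_t ≥ 0 for all t, such that |A_t| → +∞, B_t → +∞, and |(ζ₀ + γ·ζ*·B_t)/(γ·σ·A_t)| → +∞. Define v̄_t = (ζ₀ + γ·ζ*·B_t)/(1 + γ·B_t), φ̄_t = γ·σ·A_t/(1 + γ·B_t), and E_t = v̄_t·(1 − Φ(−|v̄_t/φ̄_t|)) + |φ̄_t|·φ(−|v̄_t/φ̄_t|). Then E_t → ζ* as t → ∞. -/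
open Filter Finset MeasureTheory ProbabilityTheory

lemma gaussCDF_eq_s11 (x : ℝ) : gaussCDF x = cdf (gaussianReal 0 1) x := by
  rw [gaussCDF, cdf_eq_real, measureReal_def]

lemma gaussPDF_le (x : ℝ) : gaussPDF x ≤ (Real.sqrt (2 * Real.pi))⁻¹ := by
  rw [gaussPDF, div_eq_mul_inv]
  have h1 : Real.exp (-x ^ 2 / 2) ≤ 1 := by
    rw [Real.exp_le_one_iff]; nlinarith [sq_nonneg x]
  have h2 : (0:ℝ) < (Real.sqrt (2 * Real.pi))⁻¹ := by positivity
  nlinarith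

lemma gaussPDF_nonneg (x : ℝ) : 0 ≤ gaussPDF x := by
  rw [gaussPDF]; positivity

/-- Case (5) of the convergence of the expected path-dependent
MAP estimator: if `|A t| → +∞`, `B t → +∞` and
`|(ζ₀ + γ ζ* B t)/(γ σ A t)| → +∞`, then `E t → ζ*`. -/
theorem expected_MAP_limit_case5
    (ζ₀ ζs γ σ : ℝ) (hζ₀ : 0 ≤ ζ₀) (hζs : 0 < ζs) (hγ : 0 < γ) (hσ : 0 < σ)
    (A B : ℕ → ℝ) (hA : ∀ t, A t ≠ 0) (hB : ∀ t, 0 ≤ B t)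
    (hAtop : Tendsto (fun t => |A t|) atTop atTop)
    (hBtop : Tendsto B atTop atTop)
    (hratio : Tendsto (fun t => |(ζ₀ + γ * ζs * B t) / (γ * σ * A t)|) atTop atTop) :
    Tendsto (fun t =>
        ((ζ₀ + γ * ζs * B t) / (1 + γ * B t)) *
            (1 - gaussCDF (-|((ζ₀ + γ * ζs * B t) / (1 + γ * B t)) /
              (γ * σ * A t / (1 + γ * B t))|)) +
          |γ * σ * A t / (1 + γ * B t)| *
            gaussPDF (-|((ζ₀ + γ * ζs * B t) / (1 + γ * B t)) /
              (γ * σ * A t / (1 + γ * B t))|))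
      atTop (nhds ζs) := by
  have hden : ∀ t, (0:ℝ) < 1 + γ * B t := fun t => by
    have := mul_nonneg hγ.le (hB t); linarith
  set v : ℕ → ℝ := fun t => (ζ₀ + γ * ζs * B t) / (1 + γ * B t) with hv
  set φf : ℕ → ℝ := fun t => γ * σ * A t / (1 + γ * B t) with hφ
  set r : ℕ → ℝ := fun t => (ζ₀ + γ * ζs * B t) / (γ * σ * A t) with hr
  have hφne : ∀ t, φf t ≠ 0 := fun t => by
    have : γ * σ * A t ≠ 0 := by
      exact mul_ne_zero (by positivity) (hA t)
    exact div_ne_zero this (hden t).ne'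
  have hrw : ∀ t, v t / φf t = r t := by
    intro t
    simp only [hv, hφ, hr]
    rw [div_div_div_cancel_right₀]
    exact (hden t).ne'
  -- v → ζs
  have hdentop : Tendsto (fun t => 1 + γ * B t) atTop atTop := by
    exact tendsto_atTop_add_const_left _ 1 (hBtop.const_mul_atTop hγ)
  have hvlim : Tendsto v atTop (nhds ζs) := by
    have hveq : ∀ t, v t = ζs + (ζ₀ - ζs) * (1 + γ * B t)⁻¹ := by
      intro t
      field_simp [hv, (hden t).ne']
      have hvt : v t * (1 + γ * B t) = ζ₀ + γ * ζs * B t := div_mul_cancel₀ _ (hden t).ne'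
      linear_combination hvt
    have : Tendsto (fun t => ζs + (ζ₀ - ζs) * (1 + γ * B t)⁻¹) atTop (nhds (ζs + (ζ₀ - ζs) * 0)) :=
      tendsto_const_nhds.add (tendsto_const_nhds.mul hdentop.inv_tendsto_atTop)
    simpa [funext hveq] using this
  have hrtop : Tendsto (fun t => |r t|) atTop atTop := hratio
  -- first term
  have hcdf : Tendsto (fun t => gaussCDF (-|r t|)) atTop (nhds 0) := by
    have h1 : Tendsto (fun t => -|r t|) atTop atBot := tendsto_neg_atBot_iff.2 hrtop
    have := (tendsto_cdf_atBot (gaussianReal 0 1)).comp h1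
    simpa [Function.comp_def, gaussCDF_eq_s11] using this
  have hterm1 : Tendsto (fun t => v t * (1 - gaussCDF (-|v t / φf t|))) atTop (nhds ζs) := by
    have : Tendsto (fun t => v t * (1 - gaussCDF (-|r t|))) atTop (nhds (ζs * (1 - 0))) :=
      hvlim.mul (tendsto_const_nhds.sub hcdf)
    simp only [hrw]
    simpa using this
  -- second term
  have hterm2 : Tendsto (fun t => |φf t| * gaussPDF (-|v t / φf t|)) atTop (nhds 0) := by
    have hbound : Tendsto (fun t => |v t| * |r t|⁻¹ * (Real.sqrt (2 * Real.pi))⁻¹) atTop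
        (nhds (|ζs| * 0 * (Real.sqrt (2 * Real.pi))⁻¹)) :=
      ((hvlim.abs.mul hrtop.inv_tendsto_atTop).mul tendsto_const_nhds)
    have hev : ∀ᶠ t in atTop, |φf t| * gaussPDF (-|v t / φf t|)
        ≤ |v t| * |r t|⁻¹ * (Real.sqrt (2 * Real.pi))⁻¹ := by
      filter_upwards [hvlim.eventually (eventually_gt_nhds hζs)] with t hvt
      have hvne : v t ≠ 0 := by positivity
      have hrne : r t ≠ 0 := by
        rw [← hrw t]; exact div_ne_zero hvne (hφne t)
      have hφeq : |φf t| = |v t| * |r t|⁻¹ := by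
        have : φf t = v t / r t := by
          field_simp [← hrw t, hφne t]
          rw [← hrw t, mul_div_assoc', mul_div_cancel_left₀ _ (hφne t)]
        rw [this, abs_div, div_eq_mul_inv]
      rw [hφeq, hrw t]
      have := gaussPDF_le (-|r t|)
      have h0 : 0 ≤ |v t| * |r t|⁻¹ := by positivity
      exact mul_le_mul_of_nonneg_left this h0
    refine squeeze_zero' ?_ hev (by simpa using hbound)
    filter_upwards with t
    exact mul_nonneg (abs_nonneg _) (gaussPDF_nonneg _)
  have := hterm1.add hterm2
  simpa using this
end
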